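/- For every real matrix H ∈ ℝ^{n×m} there exist matrices W₁ ∈ ℝ^{n×n} and W₂ ∈ ℝ^{m×m} such that the block matrix [[W₁, H], [Hᵀ, W₂]] ∈ ℝ^{(n+m)×(n+m)} is positive semidefinite and ½(trace(W₁) + trace(W₂)) = trace((Hᵀ H)^{1/2}); consequently, the nuclear norm of H equals the minimum of ½(trace(W₁) + trace(W₂)) over all such positive semidefinite block completions. -/

import Mathlib

open Matrix

/-- `Hᵀ H` is positive semidefinite. -/
theorem transpose_mul_self_posSemidef {n m : ℕ} (H : Matrix (Fin n) (Fin m) ℝ) :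
    (Hᵀ * H).PosSemidef := by
  simpa [Matrix.conjTranspose_eq_transpose_of_trivial] using
    Matrix.posSemidef_conjTranspose_mul_self H

section OldSqrt

open scoped ComplexOrder

/-- The square root of a positive semidefinite matrix, as defined in the older Mathlib
(removed since); restored here with its original definition. -/
noncomputable def Matrix.PosSemidef.sqrt {n 𝕜 : Type*} [Fintype n] [RCLike 𝕜] [DecidableEq n]
    {A : Matrix n n 𝕜} (hA : A.PosSemidef) : Matrix n n 𝕜 :=
  hA.1.eigenvectorUnitary.1 * diagonal ((↑) ∘ (√·) ∘ hA.1.eigenvalues) *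
    (star hA.1.eigenvectorUnitary : Matrix n n 𝕜)

end OldSqrt

section SqrtLemmas

open scoped ComplexOrder

theorem Matrix.PosSemidef.posSemidef_sqrt {n 𝕜 : Type*} [Fintype n] [RCLike 𝕜] [DecidableEq n]
    {A : Matrix n n 𝕜} (hA : A.PosSemidef) : hA.sqrt.PosSemidef := by
  unfold Matrix.PosSemidef.sqrt
  rw [star_eq_conjTranspose]
  refine Matrix.PosSemidef.mul_mul_conjTranspose_same ?_ _
  refine Matrix.PosSemidef.diagonal fun i => ?_
  simp [Real.sqrt_nonneg]

theorem Matrix.PosSemidef.sqrt_mul_self {n 𝕜 : Type*} [Fintype n] [RCLike 𝕜] [DecidableEq n]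
    {A : Matrix n n 𝕜} (hA : A.PosSemidef) : hA.sqrt * hA.sqrt = A := by
  have hU : (star hA.1.eigenvectorUnitary : Matrix n n 𝕜) * hA.1.eigenvectorUnitary = 1 :=
    Unitary.star_mul_self_of_mem hA.1.eigenvectorUnitary.2
  unfold Matrix.PosSemidef.sqrt
  conv_rhs => rw [hA.1.spectral_theorem, Unitary.conjStarAlgAut_apply]
  calc _ = (hA.1.eigenvectorUnitary : Matrix n n 𝕜) *
        (diagonal (((↑) ∘ (√·) ∘ hA.1.eigenvalues : n → 𝕜)) *
          ((star hA.1.eigenvectorUnitary : Matrix n n 𝕜) * hA.1.eigenvectorUnitary) *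
          diagonal (((↑) ∘ (√·) ∘ hA.1.eigenvalues : n → 𝕜))) *
        (star hA.1.eigenvectorUnitary : Matrix n n 𝕜) := by simp only [Matrix.mul_assoc]
    _ = _ := by
      rw [hU, Matrix.mul_one, diagonal_mul_diagonal]
      congr 3
      funext i
      simp only [Function.comp_apply, ← RCLike.ofReal_mul,
        Real.mul_self_sqrt (hA.eigenvalues_nonneg i)]

end SqrtLemmas

lemma psd_trace_nonneg {k : ℕ} {M : Matrix (Fin k) (Fin k) ℝ} (hM : M.PosSemidef) :
    0 ≤ M.trace := by
  rw [Matrix.trace]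
  refine Finset.sum_nonneg fun i _ => ?_
  have := hM.dotProduct_mulVec_nonneg (Pi.single i 1)
  simpa [dotProduct, Matrix.mulVec, Pi.single_apply, Matrix.diag, Finset.mul_sum,
    mul_comm] using this

lemma psd_trace_mul_nonneg {k : ℕ} {A B : Matrix (Fin k) (Fin k) ℝ} (hA : A.PosSemidef)
    (hB : B.PosSemidef) : 0 ≤ (A * B).trace := by
  have h1 : (A * B).trace = (hA.sqrtᴴ * B * hA.sqrt).trace := by
    conv_lhs => rw [← hA.sqrt_mul_self]
    rw [hA.posSemidef_sqrt.1, Matrix.mul_assoc, Matrix.trace_mul_comm, Matrix.mul_assoc]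
  rw [h1]
  exact psd_trace_nonneg (hB.conjTranspose_mul_mul_same _)

/-- The nuclear norm `trace ((Hᵀ H)^{1/2})` of `H` is the minimum of
`½(trace W₁ + trace W₂)` over all `W₁, W₂` making the block matrix `[[W₁, H], [Hᵀ, W₂]]`
positive semidefinite; in particular such a minimizing pair exists. -/
theorem nuclear_norm_eq_min_block_posSemidef {n m : ℕ} (H : Matrix (Fin n) (Fin m) ℝ) :
    IsLeast
      {c : ℝ | ∃ (W₁ : Matrix (Fin n) (Fin n) ℝ) (W₂ : Matrix (Fin m) (Fin m) ℝ),
        (Matrix.fromBlocks W₁ H Hᵀ W₂).PosSemidef ∧ c = (W₁.trace + W₂.trace) / 2}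
      (transpose_mul_self_posSemidef H).sqrt.trace := by
  classical
  have hA := transpose_mul_self_posSemidef H
  have hH : (Hᵀ * H).IsHermitian := hA.1
  set V : Matrix (Fin m) (Fin m) ℝ := (hH.eigenvectorUnitary : Matrix (Fin m) (Fin m) ℝ) with hVdef
  set lam : Fin m → ℝ := hH.eigenvalues with hlamdef
  have hlam0 : ∀ i, 0 ≤ lam i := fun i => hA.eigenvalues_nonneg i
  have hV' : V * Vᵀ = 1 := by
    have := (Matrix.mem_unitaryGroup_iff).mp hH.eigenvectorUnitary.2
    simpa [Matrix.star_eq_conjTranspose, Matrix.conjTranspose_eq_transpose_of_trivial] using this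
  have hV : Vᵀ * V = 1 := by
    have := (Matrix.mem_unitaryGroup_iff').mp hH.eigenvectorUnitary.2
    simpa [Matrix.star_eq_conjTranspose, Matrix.conjTranspose_eq_transpose_of_trivial] using this
  -- the conjugation map
  set N : (Fin m → ℝ) → Matrix (Fin m) (Fin m) ℝ := fun f => V * diagonal f * Vᵀ with hNdef
  have hNmul : ∀ f g, N f * N g = N (f * g) := by
    intro f g
    simp only [hNdef, Matrix.mul_assoc]
    rw [← Matrix.mul_assoc Vᵀ V, hV, Matrix.one_mul, ← Matrix.mul_assoc (diagonal f),
      diagonal_mul_diagonal]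
    rfl
  have hNT : ∀ f, (N f)ᵀ = N f := by
    intro f
    simp [hNdef, Matrix.transpose_mul, Matrix.mul_assoc]
  have hNtrace : ∀ f, (N f).trace = ∑ i, f i := by
    intro f
    rw [hNdef]
    rw [Matrix.trace_mul_cycle, hV, Matrix.one_mul, Matrix.trace_diagonal]
  have hNone : N 1 = 1 := by
    show V * diagonal 1 * Vᵀ = 1
    have hd1 : (diagonal (1 : Fin m → ℝ)) = 1 := by
      ext i j; simp [Matrix.diagonal_apply, Matrix.one_apply]
    rw [hd1, Matrix.mul_one, hV']
  have hNsub : ∀ f g, N f - N g = N (f - g) := by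
    intro f g
    simp only [hNdef]
    rw [← Matrix.sub_mul, ← Matrix.mul_sub, Matrix.diagonal_sub]
    rfl
  have hNpsd : ∀ f, (0 ≤ f) → (N f).PosSemidef := by
    intro f hf
    have hd : (diagonal f).PosSemidef := Matrix.PosSemidef.diagonal hf
    have := hd.mul_mul_conjTranspose_same V
    simpa [hNdef, Matrix.conjTranspose_eq_transpose_of_trivial] using this
  -- spectral theorem
  have hspec : Hᵀ * H = N lam := by
    have := hH.spectral_theorem
    simpa [hNdef, Matrix.star_eq_conjTranspose, Matrix.conjTranspose_eq_transpose_of_trivial,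
      RCLike.ofReal_real_eq_id] using this
  -- columns of H * V with zero eigenvalue vanish
  have hcol : ∀ j, lam j = 0 → ∀ x, (H * V) x j = 0 := by
    intro j hj x
    have hd : (H * V)ᵀ * (H * V) = diagonal lam := by
      rw [Matrix.transpose_mul, Matrix.mul_assoc, ← Matrix.mul_assoc Hᵀ, ← Matrix.mul_assoc Vᵀ,
        hspec, hNdef]
      rw [show Vᵀ * (V * diagonal lam * Vᵀ) = Vᵀ * V * diagonal lam * Vᵀ by
        simp [Matrix.mul_assoc], hV, Matrix.one_mul, Matrix.mul_assoc, hV, Matrix.mul_one]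
    have hdjj : ((H * V)ᵀ * (H * V)) j j = 0 := by rw [hd]; simp [hj]
    have hsum : ∑ y, ((H * V) y j) ^ 2 = 0 := by
      rw [← hdjj, Matrix.mul_apply]
      exact Finset.sum_congr rfl fun y _ => by rw [Matrix.transpose_apply, sq]
    have := (Finset.sum_eq_zero_iff_of_nonneg (fun y _ => sq_nonneg ((H * V) y j))).mp hsum
      x (Finset.mem_univ x)
    exact pow_eq_zero_iff (two_ne_zero) |>.mp this
  have hvan : ∀ f : Fin m → ℝ, (∀ i, lam i ≠ 0 → f i = 0) → H * N f = 0 := by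
    intro f hf
    have h0 : H * V * diagonal f = 0 := by
      ext x j
      rw [Matrix.mul_apply]
      simp only [diagonal_apply, Matrix.zero_apply]
      rw [Finset.sum_eq_single j]
      · by_cases hj : lam j = 0
        · simp [hcol j hj x]
        · simp [hf j hj]
      · intro b _ hb; simp [Matrix.diagonal_apply, hb]
      · simp
    rw [hNdef]
    simp only
    rw [← Matrix.mul_assoc, ← Matrix.mul_assoc, h0, Matrix.zero_mul]

  clear_value N V lam
  -- the key functions
  set e : Fin m → ℝ := fun i => if lam i = 0 then 0 else 1 with hedef
  set g : Fin m → ℝ := fun i => if lam i = 0 then 0 else (Real.sqrt (lam i))⁻¹ with hgdef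
  set s : Fin m → ℝ := fun i => Real.sqrt (lam i) with hsdef
  have hsqrt_pos : ∀ i, lam i ≠ 0 → 0 < Real.sqrt (lam i) := fun i hi =>
    Real.sqrt_pos.mpr (lt_of_le_of_ne (hlam0 i) (Ne.symm hi))
  have hss : s * s = lam := funext fun i => Real.mul_self_sqrt (hlam0 i)
  have hglam : g * lam = s := by
    funext i
    by_cases hi : lam i = 0
    · simp [hgdef, hsdef, hi]
    · have h1 := hsqrt_pos i hi
      have h2 : Real.sqrt (lam i) * Real.sqrt (lam i) = lam i := Real.mul_self_sqrt (hlam0 i)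
      simp only [hgdef, hsdef, Pi.mul_apply, if_neg hi]
      field_simp
      rw [Real.sq_sqrt (hlam0 i)]
  have hlamg : lam * g = s := by rw [mul_comm]; exact hglam
  have hes : e * s = s := by
    funext i
    simp only [Pi.mul_apply, hedef, hsdef]
    by_cases hi : lam i = 0
    · simp [hi]
    · simp [hi]
  have hse : s * e = s := by rw [mul_comm]; exact hes
  have hee : e * e = e := by
    funext i; by_cases hi : lam i = 0 <;> simp [hedef, hi]
  have hge : g * e = g := by
    funext i; by_cases hi : lam i = 0 <;> simp [hgdef, hedef, hi]
  have hglg : g * lam * g = e := by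
    rw [hglam]
    funext i
    by_cases hi : lam i = 0
    · simp [hsdef, hgdef, hedef, hi]
    · have h1 := hsqrt_pos i hi
      simp only [Pi.mul_apply, hsdef, hgdef, hedef, if_neg hi]
      field_simp
  have hg0 : (0 : Fin m → ℝ) ≤ g := by
    intro i
    by_cases hi : lam i = 0 <;>
      simp [hgdef, hi, inv_nonneg, Real.sqrt_nonneg]
  have hs0 : (0 : Fin m → ℝ) ≤ s := fun i => Real.sqrt_nonneg _
  have he0 : (0 : Fin m → ℝ) ≤ e := by
    intro i; by_cases hi : lam i = 0 <;> simp [hedef, hi]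
  have he1 : (0 : Fin m → ℝ) ≤ 1 - e := by
    intro i; by_cases hi : lam i = 0 <;> simp [hedef, hi]
  clear_value e g s
  -- identification of the square root
  have hS : (transpose_mul_self_posSemidef H).sqrt = N s := by
    rw [hNdef, hsdef, hVdef, hlamdef]
    simp only [Matrix.PosSemidef.sqrt]
    rw [star_eq_conjTranspose, conjTranspose_eq_transpose_of_trivial]
    rfl
  -- H is killed on the kernel directions
  have hHNe : H * N e = H := by
    have h0 : H * N e - H = 0 := by
      calc H * N e - H = H * N e - H * N 1 := by rw [hNone, Matrix.mul_one]
      _ = H * (N e - N 1) := by rw [Matrix.mul_sub]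
      _ = H * N (e - 1) := by rw [hNsub]
      _ = 0 := hvan _ (fun i hi => by simp [hedef, hi, Pi.sub_apply])
    exact sub_eq_zero.mp h0
  -- membership
  constructor
  · refine ⟨H * N g * Hᵀ, N s, ?_, ?_⟩
    · -- the block matrix is W W ᴴ for W = fromRows X Y
      set X : Matrix (Fin n) (Fin m) ℝ := H * N (fun i => Real.sqrt (g i)) with hXdef
      set Y : Matrix (Fin m) (Fin m) ℝ := N (fun i => Real.sqrt (s i)) with hYdef
      have hgg : (fun i => Real.sqrt (g i)) * (fun i => Real.sqrt (g i)) = g :=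
        funext fun i => Real.mul_self_sqrt (hg0 i)
      have hss' : (fun i => Real.sqrt (s i)) * (fun i => Real.sqrt (s i)) = s :=
        funext fun i => Real.mul_self_sqrt (hs0 i)
      have hgs : (fun i => Real.sqrt (g i)) * (fun i => Real.sqrt (s i)) = e := by
        funext i
        simp only [Pi.mul_apply, hgdef, hsdef, hedef]
        by_cases hi : lam i = 0
        · simp [hi]
        · have h1 := hsqrt_pos i hi
          have h2 : Real.sqrt (Real.sqrt (lam i)) ≠ 0 :=
            ne_of_gt (Real.sqrt_pos.mpr h1)
          simp only [if_neg hi, Real.sqrt_inv]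
          rw [inv_mul_cancel₀ h2]
      have hXX : X * Xᵀ = H * N g * Hᵀ := by
        rw [hXdef, Matrix.transpose_mul, hNT, Matrix.mul_assoc,
          ← Matrix.mul_assoc (N _), hNmul, hgg]
        simp [hNdef, Matrix.mul_assoc]
      have hXY : X * Yᵀ = H := by
        rw [hXdef, hYdef, hNT, Matrix.mul_assoc, hNmul, hgs, hHNe]
      have hYY : Y * Yᵀ = N s := by
        rw [hYdef, hNT, hNmul, hss']
      have hYX : Y * Xᵀ = Hᵀ := by
        have := congrArg Matrix.transpose hXY
        rwa [Matrix.transpose_mul, Matrix.transpose_transpose] at this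
      have hblock : fromBlocks (H * N g * Hᵀ) H Hᵀ (N s) =
          fromRows X Y * (fromRows X Y)ᴴ := by
        rw [Matrix.conjTranspose_eq_transpose_of_trivial,
          Matrix.transpose_fromRows, Matrix.fromRows_mul_fromCols,
          hXX, hXY, hYX, hYY]
      rw [hblock]
      exact Matrix.posSemidef_self_mul_conjTranspose _
    · -- value of the trace
      have htr1 : (H * N g * Hᵀ).trace = (N s).trace := by
        rw [Matrix.trace_mul_cycle, hspec, hNmul, hlamg]
      rw [hS, htr1]
      ring
  · -- lower bound
    rintro c ⟨W₁, W₂, hM, rfl⟩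
    rw [hS]
    set P : Matrix (Fin n) (Fin m) ℝ := H * N g with hPdef
    have hPT : Pᵀ = N g * Hᵀ := by rw [hPdef, Matrix.transpose_mul, hNT]
    have hPtH : Pᵀ * H = N s := by
      rw [hPT, Matrix.mul_assoc, hspec, hNmul, hglam]
    have hHtP : Hᵀ * P = N s := by
      rw [hPdef, ← Matrix.mul_assoc, hspec, hNmul, hlamg]
    have hsg : s * g = e := by rw [← hglam]; exact hglg
    have hPtP : Pᵀ * P = N e := by
      rw [hPdef, ← Matrix.mul_assoc, hPtH, hNmul, hsg]
    have hPNe : P * N e = P := by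
      rw [hPdef, Matrix.mul_assoc, hNmul, hge]
    clear_value P
    -- W₁ and W₂ are PSD
    have hW1 : W₁.PosSemidef := by
      have h := hM.conjTranspose_mul_mul_same
        (fromRows (1 : Matrix (Fin n) (Fin n) ℝ) (0 : Matrix (Fin m) (Fin n) ℝ))
      have heq : (fromRows (1 : Matrix (Fin n) (Fin n) ℝ) (0 : Matrix (Fin m) (Fin n) ℝ))ᴴ *
          fromBlocks W₁ H Hᵀ W₂ *
          fromRows (1 : Matrix (Fin n) (Fin n) ℝ) (0 : Matrix (Fin m) (Fin n) ℝ) = W₁ := by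
        rw [Matrix.mul_assoc, ← Matrix.fromRows_fromCols_eq_fromBlocks,
          Matrix.fromRows_mul, Matrix.fromCols_mul_fromRows,
          Matrix.fromCols_mul_fromRows, Matrix.conjTranspose_eq_transpose_of_trivial,
          Matrix.transpose_fromRows, Matrix.fromCols_mul_fromRows]
        simp
      rwa [heq] at h
    have hW2 : W₂.PosSemidef := by
      have h := hM.conjTranspose_mul_mul_same
        (fromRows (0 : Matrix (Fin n) (Fin m) ℝ) (1 : Matrix (Fin m) (Fin m) ℝ))
      have heq : (fromRows (0 : Matrix (Fin n) (Fin m) ℝ) (1 : Matrix (Fin m) (Fin m) ℝ))ᴴ *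
          fromBlocks W₁ H Hᵀ W₂ *
          fromRows (0 : Matrix (Fin n) (Fin m) ℝ) (1 : Matrix (Fin m) (Fin m) ℝ) = W₂ := by
        rw [Matrix.mul_assoc, ← Matrix.fromRows_fromCols_eq_fromBlocks,
          Matrix.fromRows_mul, Matrix.fromCols_mul_fromRows,
          Matrix.fromCols_mul_fromRows, Matrix.conjTranspose_eq_transpose_of_trivial,
          Matrix.transpose_fromRows, Matrix.fromCols_mul_fromRows]
        simp
      rwa [heq] at h
    -- the key test matrix
    set K : Matrix (Fin n ⊕ Fin m) (Fin m) ℝ := fromRows (-P) (N e) with hKdef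
    have hKMK : (Kᴴ * fromBlocks W₁ H Hᵀ W₂ * K).PosSemidef :=
      hM.conjTranspose_mul_mul_same K
    have hKeq : Kᴴ * fromBlocks W₁ H Hᵀ W₂ * K =
        Pᵀ * W₁ * P + N e * W₂ * N e - N s - N s := by
      rw [hKdef, Matrix.mul_assoc, ← Matrix.fromRows_fromCols_eq_fromBlocks,
        Matrix.fromRows_mul, Matrix.fromCols_mul_fromRows,
        Matrix.fromCols_mul_fromRows, Matrix.conjTranspose_eq_transpose_of_trivial,
        Matrix.transpose_fromRows, Matrix.fromCols_mul_fromRows]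
      rw [Matrix.transpose_neg, hNT]
      have f1 : Pᵀ * (H * N e) = N s := by
        rw [← Matrix.mul_assoc, hPtH, hNmul, hse]
      have f2 : N e * (Hᵀ * P) = N s := by
        rw [hHtP, hNmul, hes]
      simp only [Matrix.mul_neg, Matrix.neg_mul, Matrix.mul_add, Matrix.add_mul, neg_neg]
      rw [f1, f2, ← Matrix.mul_assoc, ← Matrix.mul_assoc]
      abel
    have htrK : 0 ≤ (Pᵀ * W₁ * P).trace + (N e * W₂ * N e).trace
        - (N s).trace - (N s).trace := by
      have := psd_trace_nonneg hKMK
      rwa [hKeq, Matrix.trace_sub, Matrix.trace_sub, Matrix.trace_add] at this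
    -- trace (Pᵀ W₁ P) ≤ trace W₁
    have hQ : (P * Pᵀ) * (P * Pᵀ) = P * Pᵀ := by
      rw [Matrix.mul_assoc, ← Matrix.mul_assoc Pᵀ, hPtP, ← Matrix.mul_assoc, hPNe]
    have hQT : (P * Pᵀ)ᵀ = P * Pᵀ := by
      rw [Matrix.transpose_mul, Matrix.transpose_transpose]
    have hRpsd : (1 - P * Pᵀ).PosSemidef := by
      have hRT : (1 - P * Pᵀ)ᴴ = 1 - P * Pᵀ := by
        rw [Matrix.conjTranspose_eq_transpose_of_trivial, Matrix.transpose_sub, hQT,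
          Matrix.transpose_one]
      have hRR : (1 - P * Pᵀ)ᴴ * (1 - P * Pᵀ) = 1 - P * Pᵀ := by
        rw [hRT, Matrix.sub_mul, Matrix.mul_sub, Matrix.mul_sub, hQ, Matrix.one_mul,
          Matrix.mul_one, Matrix.one_mul]
        abel
      have := Matrix.posSemidef_conjTranspose_mul_self (1 - P * Pᵀ)
      rwa [hRR] at this
    have htr1 : (Pᵀ * W₁ * P).trace ≤ W₁.trace := by
      have h1 : (Pᵀ * W₁ * P).trace = (W₁ * (P * Pᵀ)).trace := by
        rw [Matrix.trace_mul_cycle, Matrix.trace_mul_comm]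
      have h2 : 0 ≤ (W₁ * (1 - P * Pᵀ)).trace := psd_trace_mul_nonneg hW1 hRpsd
      rw [Matrix.mul_sub, Matrix.mul_one, Matrix.trace_sub] at h2
      linarith
    -- trace (N e W₂ N e) ≤ trace W₂
    have htr2 : (N e * W₂ * N e).trace ≤ W₂.trace := by
      have h1 : (N e * W₂ * N e).trace = (W₂ * N e).trace := by
        rw [Matrix.trace_mul_cycle, hNmul, hee, Matrix.trace_mul_comm]
      have hNepsd : (1 - N e).PosSemidef := by
        have : (1 : Matrix (Fin m) (Fin m) ℝ) - N e = N (1 - e) := by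
          rw [← hNsub, hNone]
        rw [this]
        exact hNpsd _ he1
      have h2 : 0 ≤ (W₂ * (1 - N e)).trace := psd_trace_mul_nonneg hW2 hNepsd
      rw [Matrix.mul_sub, Matrix.mul_one, Matrix.trace_sub] at h2
      linarith
    linarith
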